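/- Let f ∈ ℤ[q, q^{−1}] be nonzero. Suppose that for every field K and every z ∈ K^× that is not a root of unity, the image of f under the ring homomorphism ℤ[q, q^{−1}] → K sending q to z is nonzero. Then f is, up to sign, a product q^a · f_1^{ε_1} ⋯ f_N^{ε_N} where a ∈ ℤ, each f_j ∈ ℤ[q] is a cyclotomic polynomial, and ε_j ∈ {±1}; equivalently, f is a unit in the ring ℤ[q, q^{−1}, (q^n − 1)^{−1} : n > 0]. -/

import Mathlib

noncomputable section

/-- Evaluation of a Laurent polynomial over `ℤ` at a unit `z` of a field `K`. -/
def lEval {K : Type*} [Field K] (z : Kˣ) (f : LaurentPolynomial ℤ) : K :=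
  f.coeff.sum fun n a => (a : K) * ((z ^ n : Kˣ) : K)

/-- The canonical image of a Laurent polynomial over `ℤ` in `ℚ(q)` (with `q = X`). -/
def lRF (f : LaurentPolynomial ℤ) : RatFunc ℚ :=
  f.coeff.sum fun n a => (a : RatFunc ℚ) * (RatFunc.X : RatFunc ℚ) ^ n

/-- The subring `Ã = ℤ[q, q⁻¹, (qⁿ−1)⁻¹ : n > 0]` of `ℚ(q)`. -/
def Atilde : Subring (RatFunc ℚ) :=
  Subring.closure
    ({RatFunc.X, (RatFunc.X)⁻¹} ∪
      {x : RatFunc ℚ | ∃ n : ℕ, 0 < n ∧ x = ((RatFunc.X : RatFunc ℚ) ^ n - 1)⁻¹})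

open Polynomial LaurentPolynomial

/-- Evaluation as a ring hom. -/
def lhom {K : Type*} [Field K] (z : Kˣ) : LaurentPolynomial ℤ →+* K :=
  AddMonoidAlgebra.liftNCRingHom (Int.castRingHom K)
    ((Units.coeHom K).comp (zpowersHom Kˣ z)) fun _ _ => Commute.all _ _

lemma lEval_eq_lhom {K : Type*} [Field K] (z : Kˣ) (f : LaurentPolynomial ℤ) :
    lEval z f = lhom z f := rfl

lemma lhom_T {K : Type*} [Field K] (z : Kˣ) (n : ℤ) :
    lhom z (T n) = ((z ^ n : Kˣ) : K) := by
  have : lhom z (T n) = (Int.castRingHom K) 1 *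
      ((Units.coeHom K).comp (zpowersHom Kˣ z)) (Multiplicative.ofAdd n) :=
    AddMonoidAlgebra.liftNC_single _ _ _ _
  simpa using this

lemma lhom_toLaurent {K : Type*} [Field K] (z : Kˣ) (p : Polynomial ℤ) :
    lhom z (Polynomial.toLaurent p) = Polynomial.eval₂ (Int.castRingHom K) (z : K) p := by
  have : (lhom z).comp Polynomial.toLaurent =
      Polynomial.eval₂RingHom (Int.castRingHom K) ((z : K)) := by
    apply Polynomial.ringHom_ext' ?_ ?_
    · ext1 x; simp [Polynomial.toLaurent_C]
    · simp only [RingHom.comp_apply, Polynomial.toLaurent_X, lhom_T]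
      simp
  exact DFunLike.congr_fun this p

lemma aeval_eq_eval₂ {A : Type*} [CommRing A] [Algebra ℤ A] (x : A) (p : Polynomial ℤ) :
    Polynomial.aeval x p = Polynomial.eval₂ (Int.castRingHom A) x p := by
  rw [Polynomial.aeval_def, RingHom.ext_int (algebraMap ℤ A) (Int.castRingHom A)]

/-- The unit `X` of `ℚ(q)`. -/
def uX : (RatFunc ℚ)ˣ := Units.mk0 RatFunc.X RatFunc.X_ne_zero

lemma lRF_eq_lhom (f : LaurentPolynomial ℤ) : lRF f = lhom uX f := by
  rw [← lEval_eq_lhom]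
  unfold lRF lEval
  apply Finsupp.sum_congr
  intro n _
  rw [Units.val_zpow_eq_zpow_val]
  rfl

/-- The fundamental specialization identity. -/
lemma lhom_spec {K : Type*} [Field K] (z : Kˣ) {f : LaurentPolynomial ℤ} {n : ℕ}
    {g : Polynomial ℤ} (hfg : Polynomial.toLaurent g = f * T (n : ℤ)) :
    lhom z f * ((z : K)) ^ n = Polynomial.eval₂ (Int.castRingHom K) (z : K) g := by
  rw [← lhom_toLaurent z g, hfg, map_mul, lhom_T, zpow_natCast, Units.val_pow_eq_pow_val]

/-- Monic rational polynomials whose complex roots are all zero or roots of unity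
are of the form `X^k * ∏ cyclotomic`. -/
lemma key : ∀ (d : ℕ) (h : ℚ[X]), h.natDegree = d → h.Monic →
    (∀ μ : ℂ, Polynomial.aeval μ h = 0 → μ = 0 ∨ ∃ n : ℕ, 0 < n ∧ μ ^ n = 1) →
    ∃ (k : ℕ) (s : Multiset ℕ), (∀ n ∈ s, 0 < n) ∧
      h = X ^ k * (s.map fun n => cyclotomic n ℚ).prod := by
  intro d
  induction d using Nat.strong_induction_on with
  | _ d ih =>
    intro h hd hm hroots
    rcases Nat.eq_zero_or_pos d with rfl | hdpos
    · refine ⟨0, 0, by simp, ?_⟩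
      simp [hm.natDegree_eq_zero.mp hd]
    · have hdeg : 0 < (h.map (algebraMap ℚ ℂ)).degree := by
        rw [Polynomial.degree_map]
        exact natDegree_pos_iff_degree_pos.mp (hd ▸ hdpos)
      obtain ⟨μ, hμ⟩ := Complex.exists_root hdeg
      have hμ0 : Polynomial.aeval μ h = 0 := by
        rw [Polynomial.aeval_def, Polynomial.eval₂_eq_eval_map]; exact hμ
      rcases hroots μ hμ0 with rfl | ⟨n, hn, hμn⟩
      · have hc0 : h.coeff 0 = 0 := by
          have : algebraMap ℚ ℂ (h.coeff 0) = 0 := by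
            simpa [Polynomial.aeval_def, Polynomial.eval₂_at_zero] using hμ0
          exact (_root_.map_eq_zero _).mp this
        have hXdvd : (X : ℚ[X]) ∣ h := X_dvd_iff.mpr hc0
        obtain ⟨h₂, hh₂⟩ := hXdvd
        have hh0 : h ≠ 0 := hm.ne_zero
        have hh₂0 : h₂ ≠ 0 := by rintro rfl; simp at hh₂; exact hh0 hh₂
        have hmon₂ : h₂.Monic := by
          have := hm
          rw [Monic, hh₂, leadingCoeff_mul, leadingCoeff_X, one_mul] at this
          exact this
        have hdlt : h₂.natDegree < d := by
          have : h.natDegree = 1 + h₂.natDegree := by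
            rw [hh₂, natDegree_mul X_ne_zero hh₂0, natDegree_X]
          omega
        obtain ⟨k, s, hs, heq⟩ := ih h₂.natDegree hdlt h₂ rfl hmon₂ (fun μ hμr => by
          apply hroots μ
          rw [hh₂, map_mul, hμr, mul_zero])
        exact ⟨k + 1, s, hs, by rw [hh₂, heq]; ring⟩
      · have hfin : IsOfFinOrder μ := isOfFinOrder_iff_pow_eq_one.mpr ⟨n, hn, hμn⟩
        set m := orderOf μ with hmdef
        have hm0 : 0 < m := hfin.orderOf_pos
        have hprim : IsPrimitiveRoot μ m := IsPrimitiveRoot.orderOf μ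
        have hcyc : cyclotomic m ℚ = minpoly ℚ μ := cyclotomic_eq_minpoly_rat hprim hm0
        have hdvd : cyclotomic m ℚ ∣ h := hcyc ▸ minpoly.dvd ℚ μ hμ0
        obtain ⟨h₂, hh₂⟩ := hdvd
        have hh₂0 : h₂ ≠ 0 := by
          rintro rfl; rw [mul_zero] at hh₂; exact hm.ne_zero hh₂
        have hmon₂ : h₂.Monic := by
          have := hm
          rw [Monic, hh₂, leadingCoeff_mul, (cyclotomic.monic m ℚ).leadingCoeff, one_mul] at this
          exact this
        have htot : 0 < (cyclotomic m ℚ).natDegree := by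
          rw [natDegree_cyclotomic]; exact Nat.totient_pos.mpr hm0
        have hdlt : h₂.natDegree < d := by
          have : h.natDegree = (cyclotomic m ℚ).natDegree + h₂.natDegree := by
            rw [hh₂, natDegree_mul (cyclotomic_ne_zero m ℚ) hh₂0]
          omega
        obtain ⟨k, s, hs, heq⟩ := ih h₂.natDegree hdlt h₂ rfl hmon₂ (fun μ hμr => by
          apply hroots μ
          rw [hh₂, map_mul, hμr, mul_zero])
        refine ⟨k, m ::ₘ s, ?_, ?_⟩
        · intro x hx
          rcases Multiset.mem_cons.mp hx with rfl | hx
          · exact hm0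
          · exact hs x hx
        · rw [hh₂, heq, Multiset.map_cons, Multiset.prod_cons]; ring

/-- Polynomials over `ℤ` evaluated at elements of a subring stay in the subring. -/
lemma aeval_mem {A : Type*} [CommRing A] [Algebra ℤ A] (S : Subring A) {x : A} (hx : x ∈ S)
    (p : Polynomial ℤ) : Polynomial.aeval x p ∈ S := by
  induction p using Polynomial.induction_on' with
  | add p q hp hq => rw [map_add]; exact S.add_mem hp hq
  | monomial n a =>
    rw [Polynomial.aeval_monomial, RingHom.ext_int (algebraMap ℤ A) (Int.castRingHom A)]
    exact S.mul_mem (intCast_mem S a) (S.pow_mem hx n)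

lemma zpow_mem' {K : Type*} [Field K] (S : Subring K) {x : K} (hx : x ∈ S)
    (hxi : x⁻¹ ∈ S) (n : ℤ) : x ^ n ∈ S := by
  cases n with
  | ofNat k => simpa using S.pow_mem hx k
  | negSucc k =>
    rw [zpow_negSucc, ← inv_pow]
    exact S.pow_mem hxi (k + 1)

lemma X_mem_Atilde : (RatFunc.X : RatFunc ℚ) ∈ Atilde :=
  Subring.subset_closure (Or.inl (Or.inl rfl))

lemma Xinv_mem_Atilde : (RatFunc.X : RatFunc ℚ)⁻¹ ∈ Atilde :=
  Subring.subset_closure (Or.inl (Or.inr rfl))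

lemma Xpow_sub_one_inv_mem_Atilde {n : ℕ} (hn : 0 < n) :
    ((RatFunc.X : RatFunc ℚ) ^ n - 1)⁻¹ ∈ Atilde :=
  Subring.subset_closure (Or.inr ⟨n, hn, rfl⟩)

lemma X_pow_sub_one_ne_zero {n : ℕ} (hn : 0 < n) :
    ((RatFunc.X : RatFunc ℚ) ^ n - 1) ≠ 0 := by
  intro h
  have h1 : (RatFunc.X : RatFunc ℚ) ^ n = 1 := by linear_combination h
  have : (Polynomial.X : ℚ[X]) ^ n = 1 := by
    apply RatFunc.algebraMap_injective
    rw [map_pow, map_one, RatFunc.algebraMap_X, h1]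
  have := congrArg Polynomial.natDegree this
  simp [Polynomial.natDegree_X_pow] at this
  omega

lemma aeval_cyclotomic_ne_zero {m : ℕ} (hm : 0 < m) :
    Polynomial.aeval (RatFunc.X : RatFunc ℚ) (cyclotomic m ℤ) ≠ 0 := by
  intro h
  have hprod := prod_cyclotomic_eq_X_pow_sub_one hm ℤ
  have := congrArg (Polynomial.aeval (RatFunc.X : RatFunc ℚ)) hprod
  rw [map_prod] at this
  rw [map_sub, map_pow, map_one, Polynomial.aeval_X] at this
  have hz : (0 : RatFunc ℚ) = RatFunc.X ^ m - 1 := by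
    rw [← this]
    exact (Finset.prod_eq_zero (Nat.mem_divisors_self m hm.ne') h).symm
  exact X_pow_sub_one_ne_zero hm hz.symm

lemma inv_aeval_cyclotomic_mem_Atilde {m : ℕ} (hm : 0 < m) :
    (Polynomial.aeval (RatFunc.X : RatFunc ℚ) (cyclotomic m ℤ))⁻¹ ∈ Atilde := by
  have hprod := prod_cyclotomic_eq_X_pow_sub_one hm ℤ
  have hev := congrArg (Polynomial.aeval (RatFunc.X : RatFunc ℚ)) hprod
  rw [map_prod, map_sub, map_pow, map_one, Polynomial.aeval_X] at hev
  rw [← Finset.mul_prod_erase _ _ (Nat.mem_divisors_self m hm.ne')] at hev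
  set u := Polynomial.aeval (RatFunc.X : RatFunc ℚ) (cyclotomic m ℤ) with hu
  set P := ∏ x ∈ (Nat.divisors m).erase m,
    Polynomial.aeval (RatFunc.X : RatFunc ℚ) (cyclotomic x ℤ) with hP
  have hw : (RatFunc.X : RatFunc ℚ) ^ m - 1 ≠ 0 := X_pow_sub_one_ne_zero hm
  have hune : u ≠ 0 := aeval_cyclotomic_ne_zero hm
  have hPne : P ≠ 0 := by
    intro h; rw [h, mul_zero] at hev; exact hw hev.symm
  have hinv : u⁻¹ = P * ((RatFunc.X : RatFunc ℚ) ^ m - 1)⁻¹ := by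
    rw [← hev]
    field_simp
  rw [hinv]
  exact Atilde.mul_mem
    (Subring.prod_mem _ fun i _ => aeval_mem Atilde X_mem_Atilde _)
    (Xpow_sub_one_inv_mem_Atilde hm)

theorem stmt_1 (f : LaurentPolynomial ℤ) (hf : f ≠ 0)
    (hspec : ∀ (K : Type) (_ : Field K) (z : Kˣ),
      (∀ n : ℕ, 0 < n → z ^ n ≠ 1) → lEval z f ≠ 0) :
    (∃ (ε : ℤ) (a : ℤ) (N : ℕ) (g : Fin N → Polynomial ℤ) (ι : Fin N → ℤ),
      (ε = 1 ∨ ε = -1) ∧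
      (∀ j, ∃ n : ℕ, 0 < n ∧ g j = Polynomial.cyclotomic n ℤ) ∧
      (∀ j, ι j = 1 ∨ ι j = -1) ∧
      lRF f = (ε : RatFunc ℚ) * (RatFunc.X : RatFunc ℚ) ^ a *
        ∏ j, (Polynomial.aeval (RatFunc.X : RatFunc ℚ) (g j)) ^ (ι j)) ∧
    (lRF f ∈ Atilde ∧ (lRF f)⁻¹ ∈ Atilde) := by
  classical
  -- write f = toLaurent g * T (-n)
  obtain ⟨n, g, hfg⟩ := f.exists_T_pow
  have hg0 : g ≠ 0 := by
    rintro rfl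
    rw [map_zero] at hfg
    apply hf
    have := congrArg (· * T (-(n : ℤ))) hfg.symm
    simpa [mul_T_assoc] using this
  set G : ℚ[X] := g.map (Int.castRingHom ℚ) with hG
  have hGne : G ≠ 0 := by
    intro h
    exact hg0 (Polynomial.map_injective _ Int.cast_injective (by simpa using h))
  have hlcne : G.leadingCoeff ≠ 0 := leadingCoeff_ne_zero.mpr hGne
  -- roots of g in ℂ are 0 or roots of unity
  have hroots : ∀ μ : ℂ, Polynomial.eval₂ (Int.castRingHom ℂ) μ g = 0 →
      μ = 0 ∨ ∃ k : ℕ, 0 < k ∧ μ ^ k = 1 := by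
    intro μ hμ
    by_cases hμ0 : μ = 0
    · exact Or.inl hμ0
    right
    by_contra hcon
    push_neg at hcon
    set z : ℂˣ := Units.mk0 μ hμ0 with hz
    have hz' : ∀ k : ℕ, 0 < k → z ^ k ≠ 1 := by
      intro k hk h1
      exact hcon k hk (by
        have := congrArg Units.val h1
        simpa [hz] using this)
    have hne := hspec ℂ inferInstance z hz'
    rw [lEval_eq_lhom] at hne
    have hsp := lhom_spec z hfg
    have hzval : ((z : ℂ)) = μ := rfl
    rw [hzval, hμ] at hsp
    rcases mul_eq_zero.mp hsp with h | h
    · exact hne h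
    · exact hμ0 (pow_eq_zero_iff'.mp h).1
  -- apply the key lemma to the monic normalization of G
  have hmonH : (G * Polynomial.C G.leadingCoeff⁻¹).Monic := monic_mul_leadingCoeff_inv hGne
  obtain ⟨k, s, hs, hH⟩ := key _ (G * Polynomial.C G.leadingCoeff⁻¹) rfl hmonH (by
    intro μ hμ
    have h1 : Polynomial.aeval μ G * (algebraMap ℚ ℂ) G.leadingCoeff⁻¹ = 0 := by
      rw [← hμ, map_mul, Polynomial.aeval_C]
    have h2 : Polynomial.aeval μ G = 0 := by
      rcases mul_eq_zero.mp h1 with h | h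
      · exact h
      · exact absurd ((_root_.map_eq_zero _).mp h) (inv_ne_zero hlcne)
    apply hroots μ
    rw [hG] at h2
    rw [Polynomial.aeval_def, Polynomial.eval₂_map,
      RingHom.ext_int ((algebraMap ℚ ℂ).comp (Int.castRingHom ℚ)) (Int.castRingHom ℂ)] at h2
    exact h2)
  -- G = C lc * H, lc = cast of a
  set a : ℤ := g.leadingCoeff with ha
  have halc : G.leadingCoeff = (a : ℚ) := by
    rw [hG, Polynomial.leadingCoeff_map_of_injective (f := Int.castRingHom ℚ) Int.cast_injective]
    rfl
  have hane : a ≠ 0 := leadingCoeff_ne_zero.mpr hg0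
  -- integer factorization of g
  set w : Polynomial ℤ := Polynomial.C a * (X ^ k * (s.map fun i => cyclotomic i ℤ).prod) with hw
  have hgw : g = w := by
    apply Polynomial.map_injective (Int.castRingHom ℚ) Int.cast_injective
    rw [← hG, hw, Polynomial.map_mul, Polynomial.map_C, Polynomial.map_mul,
      Polynomial.map_pow, Polynomial.map_X]
    have hmp : ((s.map fun i => cyclotomic i ℤ).prod).map (Int.castRingHom ℚ) =
        (s.map fun i => cyclotomic i ℚ).prod := by
      rw [← Polynomial.coe_mapRingHom, map_multiset_prod, Multiset.map_map]
      congr 1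
      apply Multiset.map_congr rfl
      intro i _
      simp [map_cyclotomic_int]
    rw [hmp]
    have hthis : G = Polynomial.C G.leadingCoeff * (G * Polynomial.C G.leadingCoeff⁻¹) := by
      rw [mul_comm (Polynomial.C G.leadingCoeff), mul_assoc, ← Polynomial.C_mul,
        inv_mul_cancel₀ hlcne, Polynomial.C_1, mul_one]
    have hca : (Int.castRingHom ℚ) a = ((a : ℚ)) := rfl
    rw [hca, eq_comm, ← halc, ← hH, ← hthis]
  -- a = ±1
  have haunit : a = 1 ∨ a = -1 := by
    by_contra hcon
    have hna : a.natAbs ≠ 1 := by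
      intro h1
      rcases Int.natAbs_eq_iff.mp h1 with h | h <;> simp [h] at hcon ⊢ <;> omega
    obtain ⟨p, hp, hpa⟩ := Int.exists_prime_and_dvd hna
    set P := p.natAbs with hP
    have hPp : P.Prime := Int.prime_iff_natAbs_prime.mp hp
    haveI : Fact P.Prime := ⟨hPp⟩
    set K := RatFunc (ZMod P) with hK
    haveI : CharP K P := by
      apply charP_of_injective_ringHom (f := (algebraMap (ZMod P)[X] K).comp Polynomial.C)
      exact (RatFunc.algebraMap_injective (ZMod P)).comp Polynomial.C_injective
    set z : Kˣ := Units.mk0 RatFunc.X RatFunc.X_ne_zero with hz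
    have hz' : ∀ m : ℕ, 0 < m → z ^ m ≠ 1 := by
      intro m hm h1
      have : (RatFunc.X : K) ^ m = 1 := by
        have := congrArg Units.val h1
        simpa [hz] using this
      have : (Polynomial.X : (ZMod P)[X]) ^ m = 1 := by
        apply RatFunc.algebraMap_injective
        rw [map_pow, map_one, RatFunc.algebraMap_X, this]
      have := congrArg Polynomial.natDegree this
      simp [Polynomial.natDegree_X_pow] at this
      omega
    have hne := hspec K inferInstance z hz'
    rw [lEval_eq_lhom] at hne
    have hsp := lhom_spec z hfg
    have hcast : ((a : ℤ) : K) = 0 := by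
      rw [CharP.intCast_eq_zero_iff K P]
      exact Int.natAbs_dvd.mpr hpa
    have heval : Polynomial.eval₂ (Int.castRingHom K) ((z : K)) g = 0 := by
      rw [hgw, hw, Polynomial.eval₂_mul, Polynomial.eval₂_C]
      rw [show (Int.castRingHom K) a = ((a : ℤ) : K) from rfl, hcast, zero_mul]
    rw [heval] at hsp
    rcases mul_eq_zero.mp hsp with h | h
    · exact hne h
    · exact RatFunc.X_ne_zero (by simpa [hz] using (pow_eq_zero_iff'.mp h).1)
  -- Final assembly
  set l : List ℕ := s.toList with hl
  have hlmem : ∀ j : Fin l.length, 0 < l.get j := by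
    intro j
    apply hs
    rw [← Multiset.mem_toList]
    exact l.get_mem j
  -- the main equation
  have hmain : lRF f = (a : RatFunc ℚ) * (RatFunc.X : RatFunc ℚ) ^ ((k : ℤ) - n) *
      ∏ j : Fin l.length,
        (Polynomial.aeval (RatFunc.X : RatFunc ℚ) (cyclotomic (l.get j) ℤ)) ^ (1 : ℤ) := by
    have hsp := lhom_spec uX hfg
    have hXval : ((uX : RatFunc ℚ)) = RatFunc.X := rfl
    rw [hXval] at hsp
    have hXn : (RatFunc.X : RatFunc ℚ) ^ n ≠ 0 := pow_ne_zero _ RatFunc.X_ne_zero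
    have h1 : lRF f = Polynomial.eval₂ (Int.castRingHom (RatFunc ℚ)) RatFunc.X g *
        ((RatFunc.X : RatFunc ℚ) ^ n)⁻¹ := by
      rw [lRF_eq_lhom, ← hsp, mul_assoc, mul_inv_cancel₀ hXn, mul_one]
    -- expand eval₂ of g
    have h2 : Polynomial.eval₂ (Int.castRingHom (RatFunc ℚ)) RatFunc.X g =
        (a : RatFunc ℚ) * (RatFunc.X : RatFunc ℚ) ^ k *
          ∏ j : Fin l.length,
            Polynomial.aeval (RatFunc.X : RatFunc ℚ) (cyclotomic (l.get j) ℤ) := by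
      rw [hgw, hw]
      rw [Polynomial.eval₂_mul, Polynomial.eval₂_C, Polynomial.eval₂_mul,
        Polynomial.eval₂_pow, Polynomial.eval₂_X]
      have hprod : Polynomial.eval₂ (Int.castRingHom (RatFunc ℚ)) RatFunc.X
          ((s.map fun i => cyclotomic i ℤ).prod) =
          ∏ j : Fin l.length,
            Polynomial.aeval (RatFunc.X : RatFunc ℚ) (cyclotomic (l.get j) ℤ) := by
        rw [show Polynomial.eval₂ (Int.castRingHom (RatFunc ℚ)) RatFunc.X
            ((s.map fun i => cyclotomic i ℤ).prod) =
            Polynomial.eval₂RingHom (Int.castRingHom (RatFunc ℚ)) RatFunc.X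
            ((s.map fun i => cyclotomic i ℤ).prod) from rfl,
          map_multiset_prod, Multiset.map_map]
        have hcoe : s = (l : Multiset ℕ) := (Multiset.coe_toList s).symm
        rw [hcoe, Multiset.map_coe, Multiset.prod_coe, ← List.ofFn_getElem_eq_map,
          List.prod_ofFn]
        apply Finset.prod_congr rfl
        intro j _
        rw [aeval_eq_eval₂]
        rfl
      rw [hprod, show (Int.castRingHom (RatFunc ℚ)) a = ((a : RatFunc ℚ)) from rfl]
      ring
    rw [h1, h2]
    simp only [zpow_one]
    rw [zpow_sub₀ RatFunc.X_ne_zero, zpow_natCast, zpow_natCast, div_eq_mul_inv]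
    ring
  refine ⟨⟨a, (k : ℤ) - n, l.length, fun j => cyclotomic (l.get j) ℤ, fun _ => 1, haunit,
    fun j => ⟨l.get j, hlmem j, rfl⟩, fun _ => Or.inl rfl, hmain⟩, ?_, ?_⟩
  · rw [hmain]
    refine Atilde.mul_mem (Atilde.mul_mem (intCast_mem Atilde a)
      (zpow_mem' Atilde X_mem_Atilde Xinv_mem_Atilde _)) ?_
    exact Subring.prod_mem _ fun j _ => by
      rw [zpow_one]; exact aeval_mem Atilde X_mem_Atilde _
  · rw [hmain, mul_inv, mul_inv, ← Finset.prod_inv_distrib]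
    refine Atilde.mul_mem (Atilde.mul_mem ?_ ?_) ?_
    · rcases haunit with h | h <;> rw [h] <;> norm_num <;> exact Atilde.one_mem
    · rw [← zpow_neg]
      exact zpow_mem' Atilde X_mem_Atilde Xinv_mem_Atilde _
    · exact Subring.prod_mem _ fun j _ => by
        rw [zpow_one]
        exact inv_aeval_cyclotomic_mem_Atilde (hlmem j)
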